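/- arXiv:1509.02488 — 5 statements merged into one kernel-verified Lean document; each statement's English description precedes it below -/
import Mathlib

section
/- If 0 ≤ b < y < a ≤ 1 and the point P(y) satisfies dist(P(a), P(y)) = dist(P(y), P(b)), then dist(P(a), P(y)) ≤ dist(P(a), P(b)) / √2. -/
/-- The point of the quarter of the unit circle in the closed first quadrant
with ordinate `y`. -/
noncomputable def P (y : ℝ) : EuclideanSpace ℝ (Fin 2) := WithLp.toLp 2 ![Real.sqrt (1 - y ^ 2), y]

lemma dist_P_sq (u v : ℝ) :
    dist (P u) (P v) ^ 2 =
      (Real.sqrt (1 - u ^ 2) - Real.sqrt (1 - v ^ 2)) ^ 2 + (u - v) ^ 2 := by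
  rw [EuclideanSpace.dist_eq, Real.sq_sqrt (by positivity)]
  simp [P, Fin.sum_univ_two, Real.dist_eq, sq_abs]

/-- Pure algebraic core. -/
lemma core (a b y A B Y : ℝ) (hb : 0 ≤ b) (hby : b < y) (hya : y < a)
    (hA0 : 0 ≤ A) (hB0 : 0 ≤ B) (hY0 : 0 ≤ Y)
    (hA2 : A ^ 2 = 1 - a ^ 2) (hB2 : B ^ 2 = 1 - b ^ 2) (hY2 : Y ^ 2 = 1 - y ^ 2)
    (heq2 : (A - Y) ^ 2 + (a - y) ^ 2 = (Y - B) ^ 2 + (y - b) ^ 2) :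
    2 * ((A - Y) ^ 2 + (a - y) ^ 2) ≤ (A - B) ^ 2 + (a - b) ^ 2 := by
  have hy0 : 0 ≤ y := le_of_lt (lt_of_le_of_lt hb hby)
  have ha0 : 0 ≤ a := le_of_lt (lt_of_le_of_lt hy0 hya)
  set c := A * Y + a * y with hc
  set d := A * B + a * b with hd
  have hce : A * Y + a * y = B * Y + b * y := by
    linear_combination (-1/2 : ℝ) * heq2 + (1/2 : ℝ) * hA2 + (-1/2 : ℝ) * hB2
  have h1 : (A - B) * Y = (b - a) * y := by linear_combination hce
  have h2 : (A + B) * (A - B) = (b + a) * (b - a) := by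
    linear_combination hA2 - hB2
  have hab : b - a ≠ 0 := by linarith
  have h3 : (a + b) * Y = (A + B) * y := by
    apply mul_left_cancel₀ hab
    have h4 : (A + B) * ((A - B) * Y) = (A + B) * ((b - a) * y) := by rw [h1]
    linear_combination h4 - Y * h2
  have hone : Y ^ 2 + y ^ 2 = 1 := by linarith [hY2]
  have hAB : A + B = 2 * c * Y := by
    have h5 : (A + B) * (Y ^ 2 + y ^ 2) = 2 * c * Y := by
      linear_combination (-y) * h3 + (-Y) * hce
    calc A + B = (A + B) * (Y ^ 2 + y ^ 2) := by rw [hone]; ring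
    _ = 2 * c * Y := h5
  have hab2 : a + b = 2 * c * y := by
    have h6 : (a + b) * (Y ^ 2 + y ^ 2) = 2 * c * y := by
      linear_combination Y * h3 + (-y) * hce
    calc a + b = (a + b) * (Y ^ 2 + y ^ 2) := by rw [hone]; ring
    _ = 2 * c * y := h6
  have hd2 : d = 2 * c ^ 2 - 1 := by
    have hnorm : (A + B) ^ 2 + (a + b) ^ 2 = 2 + 2 * d := by
      linear_combination hA2 + hB2
    have ht : (2 * c * Y) ^ 2 + (2 * c * y) ^ 2 = 2 + 2 * d := by
      rw [← hAB, ← hab2]; exact hnorm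
    linear_combination (-1/2 : ℝ) * ht + 2 * c ^ 2 * hone
  have hc0 : 0 ≤ c := by positivity
  have hc1 : c ≤ 1 := by
    have t1 := two_mul_le_add_sq A Y
    have t2 := two_mul_le_add_sq a y
    simp only [hc]
    linarith
  have hkey : d ≤ 2 * c - 1 := by
    have hcc : c ^ 2 ≤ c := by
      calc c ^ 2 = c * c := sq c
      _ ≤ 1 * c := mul_le_mul_of_nonneg_right hc1 hc0
      _ = c := one_mul c
    linarith [hd2, hcc]
  have e1 : (A - Y) ^ 2 + (a - y) ^ 2 = 2 - 2 * c := by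
    linear_combination hA2 + hY2
  have e2 : (A - B) ^ 2 + (a - b) ^ 2 = 2 - 2 * d := by
    linear_combination hA2 + hB2
  rw [e1, e2]; linarith

/-- If `0 ≤ b < y < a ≤ 1` and `P y` is equidistant from `P a` and `P b`, then
`dist (P a) (P y) ≤ dist (P a) (P b) / √2`. -/
theorem equidistant_point_dist_le (a b y : ℝ) (hb : 0 ≤ b) (hby : b < y) (hya : y < a)
    (ha : a ≤ 1) (heq : dist (P a) (P y) = dist (P y) (P b)) :
    dist (P a) (P y) ≤ dist (P a) (P b) / Real.sqrt 2 := by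
  have hy0 : 0 ≤ y := le_of_lt (lt_of_le_of_lt hb hby)
  have ha0 : 0 ≤ a := le_of_lt (lt_of_le_of_lt hy0 hya)
  have hy1 : y ≤ 1 := le_of_lt (lt_of_lt_of_le hya ha)
  have hb1 : b ≤ 1 := le_of_lt (lt_of_lt_of_le hby hy1)
  have hA2 : Real.sqrt (1 - a ^ 2) ^ 2 = 1 - a ^ 2 := Real.sq_sqrt (by nlinarith)
  have hY2 : Real.sqrt (1 - y ^ 2) ^ 2 = 1 - y ^ 2 := Real.sq_sqrt (by nlinarith)
  have hB2 : Real.sqrt (1 - b ^ 2) ^ 2 = 1 - b ^ 2 := Real.sq_sqrt (by nlinarith)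
  have heq2 : (Real.sqrt (1 - a ^ 2) - Real.sqrt (1 - y ^ 2)) ^ 2 + (a - y) ^ 2 =
      (Real.sqrt (1 - y ^ 2) - Real.sqrt (1 - b ^ 2)) ^ 2 + (y - b) ^ 2 := by
    rw [← dist_P_sq, ← dist_P_sq, heq]
  have hcore := core a b y (Real.sqrt (1 - a ^ 2)) (Real.sqrt (1 - b ^ 2))
    (Real.sqrt (1 - y ^ 2)) hb hby hya (Real.sqrt_nonneg _) (Real.sqrt_nonneg _)
    (Real.sqrt_nonneg _) hA2 hB2 hY2 heq2
  have hs2 : (0:ℝ) < Real.sqrt 2 := Real.sqrt_pos.mpr (by norm_num)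
  rw [le_div_iff₀ hs2]
  have hleft : 0 ≤ dist (P a) (P y) * Real.sqrt 2 := by positivity
  have hright : 0 ≤ dist (P a) (P b) := dist_nonneg
  have hsq : (dist (P a) (P y) * Real.sqrt 2) ^ 2 ≤ dist (P a) (P b) ^ 2 := by
    have h2' : Real.sqrt 2 ^ 2 = 2 := Real.sq_sqrt (by norm_num)
    rw [mul_pow, h2', dist_P_sq, dist_P_sq]
    linarith [hcore]
  calc dist (P a) (P y) * Real.sqrt 2
      = Real.sqrt ((dist (P a) (P y) * Real.sqrt 2) ^ 2) := (Real.sqrt_sq hleft).symm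
    _ ≤ Real.sqrt (dist (P a) (P b) ^ 2) := Real.sqrt_le_sqrt hsq
    _ = dist (P a) (P b) := Real.sqrt_sq hright
end

section
/- Let 0 ≤ b < a ≤ 1 and let a = t₀ > t₁ > ⋯ > t_n = b (n ≥ 1) be a strictly decreasing sequence in [b, a]. Set ℓ_i = dist(P(t_{i−1}), P(t_i)) for 1 ≤ i ≤ n, ℓ⁰ = dist(P(a), P(b)), h_i = √(1 − (ℓ_i/2)²), and h⁰ = √(1 − (ℓ⁰/2)²). Then ℓ⁰ ≤ Σ_{i=1}^n ℓ_i ≤ (Σ_{i=1}^n h_i ℓ_i) / (min_{1≤i≤n} h_i) ≤ ℓ⁰ / (h⁰ · min_{1≤i≤n} h_i). -/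
/-- `t 0 = a > t 1 > ⋯ > t n = b` is a strictly decreasing finite sequence (a partition
of the arc of the quarter circle from `P a` to `P b`). -/
def IsPartition (a b : ℝ) (n : ℕ) (t : ℕ → ℝ) : Prop :=
  0 < n ∧ t 0 = a ∧ t n = b ∧ ∀ i < n, t (i + 1) < t i

open Real in
lemma pi_facts : (0:ℝ) < Real.pi := Real.pi_pos

local notation "π" => Real.pi

lemma P_sin (φ : ℝ) (hc : 0 ≤ Real.cos φ) : P (Real.sin φ) = WithLp.toLp 2 ![Real.cos φ, Real.sin φ] := by
  unfold P
  rw [show (1:ℝ) - Real.sin φ ^ 2 = Real.cos φ ^ 2 by rw [Real.cos_sq'], Real.sqrt_sq hc]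

lemma chord (θ θ' : ℝ) (h1 : θ' ≤ θ) (h2 : θ - θ' ≤ π)
    (hc : 0 ≤ Real.cos θ) (hc' : 0 ≤ Real.cos θ') :
    dist (P (Real.sin θ)) (P (Real.sin θ')) = 2 * Real.sin ((θ - θ') / 2) := by
  rw [P_sin θ hc, P_sin θ' hc', EuclideanSpace.dist_eq]
  have hs : 0 ≤ Real.sin ((θ - θ') / 2) :=
    Real.sin_nonneg_of_nonneg_of_le_pi (by linarith) (by linarith)
  rw [show (2 : ℝ) * Real.sin ((θ - θ') / 2) = Real.sqrt ((2 * Real.sin ((θ - θ')/2))^2) by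
    rw [Real.sqrt_sq (by linarith)]]
  congr 1
  rw [Fin.sum_univ_two]
  simp only [PiLp.toLp_apply, Matrix.cons_val_zero, Matrix.cons_val_one, Matrix.head_cons, Real.dist_eq, sq_abs]
  have hcos : Real.cos (θ - θ') = Real.cos θ * Real.cos θ' + Real.sin θ * Real.sin θ' :=
    Real.cos_sub θ θ'
  have h2s : Real.cos (θ - θ') = 1 - 2 * Real.sin ((θ - θ')/2) ^ 2 := by
    rw [show θ - θ' = 2 * ((θ - θ')/2) by ring, Real.cos_two_mul', Real.cos_sq']; ring
  have e1 := Real.sin_sq_add_cos_sq θ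
  have e2 := Real.sin_sq_add_cos_sq θ'
  nlinarith [hcos, h2s]

/-- If `0 ≤ y' ≤ y ≤ 1` then the chord `dist (P y) (P y')` is `2 sin(Δ/2)` and the
corresponding altitude is `cos(Δ/2)` where `Δ = arcsin y - arcsin y'`. -/
lemma chord_arcsin {y' y : ℝ} (h0 : 0 ≤ y') (h1 : y' ≤ y) (h2 : y ≤ 1) :
    dist (P y) (P y') = 2 * Real.sin ((Real.arcsin y - Real.arcsin y') / 2) ∧
    Real.sqrt (1 - (dist (P y) (P y') / 2) ^ 2)
      = Real.cos ((Real.arcsin y - Real.arcsin y') / 2) := by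
  have hy : Real.sin (Real.arcsin y) = y := Real.sin_arcsin (by linarith) h2
  have hy' : Real.sin (Real.arcsin y') = y' := Real.sin_arcsin (by linarith) (by linarith)
  have hle : Real.arcsin y' ≤ Real.arcsin y := Real.monotone_arcsin h1
  have hub : Real.arcsin y ≤ π / 2 := Real.arcsin_le_pi_div_two y
  have hlb : 0 ≤ Real.arcsin y' := Real.arcsin_nonneg.2 h0
  have hch : dist (P y) (P y') = 2 * Real.sin ((Real.arcsin y - Real.arcsin y') / 2) := by
    have e : dist (P y) (P y')
        = dist (P (Real.sin (Real.arcsin y))) (P (Real.sin (Real.arcsin y'))) := by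
      rw [hy, hy']
    rw [e]
    exact chord _ _ hle (by have := Real.pi_pos; linarith)
      (Real.cos_arcsin_nonneg y) (Real.cos_arcsin_nonneg y')
  refine ⟨hch, ?_⟩
  rw [hch]
  have hcc : 0 ≤ Real.cos ((Real.arcsin y - Real.arcsin y') / 2) :=
    Real.cos_nonneg_of_mem_Icc ⟨by have := Real.pi_pos; linarith, by linarith⟩
  rw [show (1:ℝ) - (2 * Real.sin ((Real.arcsin y - Real.arcsin y') / 2) / 2) ^ 2
      = Real.cos ((Real.arcsin y - Real.arcsin y') / 2) ^ 2 by
    rw [Real.cos_sq']; ring, Real.sqrt_sq hcc]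

/-- The chain of inequalities of Proposition 1:
`ℓ⁰ ≤ Σ ℓᵢ ≤ (Σ hᵢ ℓᵢ) / min hᵢ ≤ ℓ⁰ / (h⁰ · min hᵢ)`. -/
theorem polygonal_chain_inequalities (a b : ℝ) (hb : 0 ≤ b) (hba : b < a) (ha : a ≤ 1)
    (n : ℕ) (t : ℕ → ℝ) (hpart : IsPartition a b n t)
    (ℓ : ℕ → ℝ) (hℓ : ∀ i, ℓ i = dist (P (t i)) (P (t (i + 1))))
    (ℓ0 : ℝ) (hℓ0 : ℓ0 = dist (P a) (P b))
    (h : ℕ → ℝ) (hh : ∀ i, h i = Real.sqrt (1 - (ℓ i / 2) ^ 2))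
    (h0 : ℝ) (hh0 : h0 = Real.sqrt (1 - (ℓ0 / 2) ^ 2))
    (hne : (Finset.range n).Nonempty) :
    ℓ0 ≤ ∑ i ∈ Finset.range n, ℓ i ∧
    (∑ i ∈ Finset.range n, ℓ i) ≤ (∑ i ∈ Finset.range n, h i * ℓ i) / ((Finset.range n).inf' hne h) ∧
    (∑ i ∈ Finset.range n, h i * ℓ i) / ((Finset.range n).inf' hne h)
      ≤ ℓ0 / (h0 * (Finset.range n).inf' hne h) := by
  obtain ⟨hn, ht0, htn, hdec⟩ := hpart
  -- monotonicity of t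
  have hmono : ∀ j, j ≤ n → ∀ i, i ≤ j → t j ≤ t i := by
    intro j
    induction j with
    | zero =>
      intro _ i hi
      rw [Nat.le_zero.mp hi]
    | succ j ih =>
      intro hjn i hij
      rcases Nat.eq_or_lt_of_le hij with he | hlt
      · rw [he]
      · have h1 : t (j+1) < t j := hdec j (by omega)
        have h2 : t j ≤ t i := ih (by omega) i (by omega)
        linarith
  have hti_mem : ∀ i ≤ n, b ≤ t i ∧ t i ≤ a := by
    intro i hi
    constructor
    · rw [← htn]; exact hmono n le_rfl i hi
    · rw [← ht0]; exact hmono i hi 0 (Nat.zero_le i)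
  set θ : ℕ → ℝ := fun i => Real.arcsin (t i) with hθ
  -- per-index facts
  have key : ∀ i < n, ℓ i = 2 * Real.sin ((θ i - θ (i+1)) / 2)
      ∧ h i = Real.cos ((θ i - θ (i+1)) / 2) := by
    intro i hi
    have h1 := hti_mem i (le_of_lt hi)
    have h2 := hti_mem (i+1) hi
    have hle : t (i+1) ≤ t i := (hdec i hi).le
    obtain ⟨c1, c2⟩ := chord_arcsin (by linarith [h2.1]) hle (by linarith [h1.2])
    refine ⟨by rw [hℓ]; exact c1, ?_⟩
    rw [hh, hℓ]; exact c2
  have hθub : ∀ i ≤ n, θ i ≤ π / 2 := fun i _ => Real.arcsin_le_pi_div_two (t i)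
  have hθlb : ∀ i ≤ n, 0 ≤ θ i := fun i hi =>
    Real.arcsin_nonneg.2 (by linarith [(hti_mem i hi).1])
  have hθle : ∀ i < n, θ (i+1) ≤ θ i := fun i hi =>
    Real.monotone_arcsin (hdec i hi).le
  -- positivity of each h i on range n
  have hpos : ∀ i ∈ Finset.range n, 0 < h i := by
    intro i hi
    rw [Finset.mem_range] at hi
    rw [(key i hi).2]
    apply Real.cos_pos_of_mem_Ioo
    have p1 := Real.pi_pos
    have p2 := hθub i hi.le
    have p3 := hθlb (i+1) hi
    have p4 := hθle i hi
    exact Set.mem_Ioo.2 ⟨by linarith, by linarith⟩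
  set m := (Finset.range n).inf' hne h with hm
  have hmpos : 0 < m := (Finset.lt_inf'_iff hne).2 hpos
  have hml : ∀ i ∈ Finset.range n, m ≤ h i := fun i hi => Finset.inf'_le h hi
  have hℓnn : ∀ i, 0 ≤ ℓ i := fun i => by rw [hℓ]; exact dist_nonneg
  set Δ := Real.arcsin a - Real.arcsin b with hΔdef
  have hθ0 : θ 0 = Real.arcsin a := by simp [hθ, ht0]
  have hθn : θ n = Real.arcsin b := by simp [hθ, htn]
  have hl0 : ℓ0 = 2 * Real.sin (Δ / 2) := by
    rw [hℓ0]; exact (chord_arcsin hb hba.le ha).1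
  have hh0' : h0 = Real.cos (Δ / 2) := by
    rw [hh0, hℓ0]; exact (chord_arcsin hb hba.le ha).2
  have hΔub : Δ ≤ π / 2 := by
    have := Real.arcsin_le_pi_div_two a
    have : 0 ≤ Real.arcsin b := Real.arcsin_nonneg.2 hb
    have := Real.arcsin_le_pi_div_two a
    rw [hΔdef]; linarith
  have hΔpos : 0 < Δ := by
    rw [hΔdef]
    have := Real.strictMonoOn_arcsin (Set.mem_Icc.2 ⟨by linarith, by linarith⟩)
      (Set.mem_Icc.2 ⟨by linarith, ha⟩) hba
    linarith
  have hpi := Real.pi_pos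
  have h0pos : 0 < h0 := by
    rw [hh0']
    exact Real.cos_pos_of_mem_Ioo (Set.mem_Ioo.2 ⟨by linarith, by linarith⟩)
  -- first inequality
  have ineq1 : ℓ0 ≤ ∑ i ∈ Finset.range n, ℓ i := by
    rw [hℓ0, ← ht0, ← htn]
    calc dist (P (t 0)) (P (t n))
        ≤ ∑ i ∈ Finset.range n, dist (P (t i)) (P (t (i+1))) :=
          dist_le_range_sum_dist (fun i => P (t i)) n
      _ = ∑ i ∈ Finset.range n, ℓ i :=
          Finset.sum_congr rfl (fun i _ => (hℓ i).symm)
  -- core estimate : ∑ h ℓ ≤ Δ ≤ ℓ0 / h0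
  have core : ∑ i ∈ Finset.range n, h i * ℓ i ≤ Δ := by
    have hsumΔ : ∑ i ∈ Finset.range n, (θ i - θ (i+1)) = θ 0 - θ n :=
      Finset.sum_range_sub' θ n
    calc ∑ i ∈ Finset.range n, h i * ℓ i
        ≤ ∑ i ∈ Finset.range n, (θ i - θ (i+1)) := by
          apply Finset.sum_le_sum
          intro i hi
          rw [Finset.mem_range] at hi
          rw [(key i hi).1, (key i hi).2]
          have e : Real.cos ((θ i - θ (i+1))/2) * (2 * Real.sin ((θ i - θ (i+1))/2))
              = Real.sin (θ i - θ (i+1)) := by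
            rw [show θ i - θ (i+1) = 2 * ((θ i - θ (i+1))/2) by ring, Real.sin_two_mul]
            ring
          rw [e]
          exact Real.sin_le (by linarith [hθle i hi])
      _ = θ 0 - θ n := hsumΔ
      _ = Δ := by rw [hθ0, hθn]
  have core2 : Δ ≤ ℓ0 / h0 := by
    rw [hl0, hh0']
    have ht : Δ / 2 ≤ Real.tan (Δ / 2) :=
      le_of_lt (Real.lt_tan (by linarith) (by linarith))
    rw [Real.tan_eq_sin_div_cos] at ht
    rw [mul_div_assoc]
    linarith
  -- second inequality
  have ineq2 : (∑ i ∈ Finset.range n, ℓ i)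
      ≤ (∑ i ∈ Finset.range n, h i * ℓ i) / m := by
    rw [le_div_iff₀ hmpos]
    calc (∑ i ∈ Finset.range n, ℓ i) * m = ∑ i ∈ Finset.range n, ℓ i * m :=
        Finset.sum_mul _ _ _
      _ ≤ ∑ i ∈ Finset.range n, h i * ℓ i := by
        apply Finset.sum_le_sum
        intro i hi
        calc ℓ i * m ≤ ℓ i * h i := mul_le_mul_of_nonneg_left (hml i hi) (hℓnn i)
          _ = h i * ℓ i := mul_comm _ _
  refine ⟨ineq1, ineq2, ?_⟩
  rw [← div_div]
  exact div_le_div_of_nonneg_right (core.trans core2) hmpos.le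
end

section
/- Let 0 ≤ b < a ≤ 1 and let a = t₀ > t₁ > ⋯ > t_n = b (n ≥ 1) be a strictly decreasing sequence in [b, a]. Set ℓ_i = dist(P(t_{i−1}), P(t_i)), ℓ⁰ = dist(P(a), P(b)) and h⁰ = √(1 − (ℓ⁰/2)²). Then Σ_{i=1}^n ℓ_i ≤ ℓ⁰ / (h⁰)². In particular, the polygonal length of any partition of the arc from P(a) to P(b) is bounded above by dist(P(a),P(b)) / (1 − (dist(P(a),P(b))/2)²). -/
open Real

/-- chord formula -/
lemma chord_eq (y z : ℝ) (hy : y ∈ Set.Icc (-1:ℝ) 1) (hz : z ∈ Set.Icc (-1:ℝ) 1) :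
    dist (P y) (P z) = 2 * |Real.sin ((Real.arcsin y - Real.arcsin z) / 2)| := by
  have hPy0 : P y 0 = Real.cos (Real.arcsin y) := by
    simp [P, Real.cos_arcsin]
  have hPy1 : P y 1 = Real.sin (Real.arcsin y) := by
    simp [P, Real.sin_arcsin hy.1 hy.2]
  have hPz0 : P z 0 = Real.cos (Real.arcsin z) := by
    simp [P, Real.cos_arcsin]
  have hPz1 : P z 1 = Real.sin (Real.arcsin z) := by
    simp [P, Real.sin_arcsin hz.1 hz.2]
  set θ := Real.arcsin y
  set φ := Real.arcsin z
  have hdist : dist (P y) (P z)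
      = Real.sqrt ((Real.cos θ - Real.cos φ) ^ 2 + (Real.sin θ - Real.sin φ) ^ 2) := by
    rw [EuclideanSpace.dist_eq, Fin.sum_univ_two, hPy0, hPy1, hPz0, hPz1]
    simp only [Real.dist_eq, sq_abs]
  have hkey : (Real.cos θ - Real.cos φ) ^ 2 + (Real.sin θ - Real.sin φ) ^ 2
      = (2 * |Real.sin ((θ - φ) / 2)|) ^ 2 := by
    have h1 : Real.sin θ ^ 2 + Real.cos θ ^ 2 = 1 := Real.sin_sq_add_cos_sq θ
    have h2 : Real.sin φ ^ 2 + Real.cos φ ^ 2 = 1 := Real.sin_sq_add_cos_sq φ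
    have h3 : Real.cos (θ - φ) = Real.cos θ * Real.cos φ + Real.sin θ * Real.sin φ :=
      Real.cos_sub θ φ
    have h4 : Real.sin ((θ - φ) / 2) ^ 2 = 1 / 2 - Real.cos (2 * ((θ - φ) / 2)) / 2 :=
      Real.sin_sq_eq_half_sub _
    have h5 : 2 * ((θ - φ) / 2) = θ - φ := by ring
    rw [h5] at h4
    have h6 : |Real.sin ((θ - φ) / 2)| ^ 2 = Real.sin ((θ - φ) / 2) ^ 2 := sq_abs _
    nlinarith [h4, h6]
  rw [hdist, hkey, Real.sqrt_sq (by positivity)]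

/-- The polygonal length of any partition of the arc from `P a` to `P b` is bounded above
by `ℓ⁰ / (h⁰)²` where `ℓ⁰ = dist (P a) (P b)` and `h⁰ = √(1 - (ℓ⁰/2)²)`. -/
theorem polygonal_length_bounded (a b : ℝ) (hb : 0 ≤ b) (hba : b < a) (ha : a ≤ 1)
    (n : ℕ) (t : ℕ → ℝ) (hpart : IsPartition a b n t)
    (ℓ : ℕ → ℝ) (hℓ : ∀ i, ℓ i = dist (P (t i)) (P (t (i + 1))))
    (ℓ0 : ℝ) (hℓ0 : ℓ0 = dist (P a) (P b))
    (h0 : ℝ) (hh0 : h0 = Real.sqrt (1 - (ℓ0 / 2) ^ 2)) :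
    ∑ i ∈ Finset.range n, ℓ i ≤ ℓ0 / h0 ^ 2 := by
  obtain ⟨hn, ht0, htn, hdec⟩ := hpart
  -- monotonicity: for i ≤ j ≤ n, t j ≤ t i
  have hmono : ∀ i j, i ≤ j → j ≤ n → t j ≤ t i := by
    intro i j hij hjn
    induction j with
    | zero => simp_all
    | succ k ih =>
      rcases Nat.eq_or_lt_of_le hij with rfl | h
      · exact le_rfl
      · exact le_trans (le_of_lt (hdec k (by omega))) (ih (by omega) (by omega))
  have hbound : ∀ i, i ≤ n → b ≤ t i ∧ t i ≤ 1 := by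
    intro i hi
    constructor
    · rw [← htn]; exact hmono i n hi le_rfl
    · calc t i ≤ t 0 := hmono 0 i (Nat.zero_le _) hi
        _ = a := ht0
        _ ≤ 1 := ha
  have hIcc : ∀ i, i ≤ n → t i ∈ Set.Icc (-1:ℝ) 1 := by
    intro i hi
    obtain ⟨h1, h2⟩ := hbound i hi
    exact ⟨by linarith, h2⟩
  -- angles
  set θ : ℕ → ℝ := fun i => Real.arcsin (t i) with hθ
  have hθrange : ∀ i, i ≤ n → 0 ≤ θ i ∧ θ i ≤ π / 2 := by
    intro i hi
    exact ⟨Real.arcsin_nonneg.2 (le_trans hb (hbound i hi).1), Real.arcsin_le_pi_div_two _⟩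
  have hθmono : ∀ i < n, θ (i + 1) < θ i := by
    intro i hi
    exact Real.strictMonoOn_arcsin (hIcc (i+1) (by omega)) (hIcc i (by omega)) (hdec i hi)
  -- each chord ≤ angle difference
  have hstep : ∀ i < n, ℓ i ≤ θ i - θ (i + 1) := by
    intro i hi
    rw [hℓ i, chord_eq _ _ (hIcc i (by omega)) (hIcc (i+1) (by omega))]
    have hd : 0 ≤ (θ i - θ (i + 1)) / 2 := by linarith [hθmono i hi]
    have hle : (θ i - θ (i + 1)) / 2 ≤ π := by
      have h1 := hθrange i (by omega)
      have h2 := hθrange (i+1) (by omega)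
      have := Real.pi_pos
      linarith [h1.2, h2.1]
    have hs : 0 ≤ Real.sin ((θ i - θ (i + 1)) / 2) :=
      Real.sin_nonneg_of_nonneg_of_le_pi hd hle
    rw [abs_of_nonneg hs]
    linarith [Real.sin_le hd]
  -- telescoping
  have hsum : ∑ i ∈ Finset.range n, ℓ i ≤ θ 0 - θ n := by
    have : θ 0 - θ n = ∑ i ∈ Finset.range n, (θ i - θ (i + 1)) := by
      rw [Finset.sum_range_sub' (fun i => θ i) n]
    rw [this]
    exact Finset.sum_le_sum (fun i hi => hstep i (Finset.mem_range.1 hi))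
  -- let Δ = θ 0 - θ n, x = Δ/2
  set Δ := θ 0 - θ n with hΔ
  have hΔpos : 0 < Δ := by
    have htlt : t n < t 0 := by rw [ht0, htn]; exact hba
    have : θ n < θ 0 :=
      Real.strictMonoOn_arcsin (hIcc n le_rfl) (hIcc 0 (Nat.zero_le _)) htlt
    linarith
  have hΔle : Δ ≤ π / 2 := by
    have h1 := hθrange 0 (Nat.zero_le _)
    have h2 := hθrange n le_rfl
    simp only [hΔ]; linarith [h1.2, h2.1]
  set x := Δ / 2 with hx
  have hxpos : 0 < x := by positivity
  have hxlt : x < π / 2 := by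
    have : (0:ℝ) < π := Real.pi_pos
    rw [hx]; linarith
  -- ℓ0 = 2 sin x
  have hsinx : 0 ≤ Real.sin x := Real.sin_nonneg_of_nonneg_of_le_pi (le_of_lt hxpos)
    (by linarith [Real.pi_pos])
  have hℓ0eq : ℓ0 = 2 * Real.sin x := by
    rw [hℓ0, chord_eq a b ⟨by linarith, ha⟩ ⟨by linarith, by linarith⟩]
    have : (Real.arcsin a - Real.arcsin b) / 2 = x := by
      simp only [hx, hΔ, hθ, ht0, htn]
    rw [this, abs_of_nonneg hsinx]
  have hcos : 0 < Real.cos x := Real.cos_pos_of_mem_Ioo ⟨by linarith, hxlt⟩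
  -- h0 = cos x
  have hh0eq : h0 = Real.cos x := by
    rw [hh0, hℓ0eq]
    have : 1 - (2 * Real.sin x / 2) ^ 2 = Real.cos x ^ 2 := by
      have := Real.sin_sq_add_cos_sq x
      nlinarith
    rw [this, Real.sqrt_sq (le_of_lt hcos)]
  -- key inequality: Δ ≤ 2 sin x / cos² x
  have hkey : Δ ≤ 2 * Real.sin x / Real.cos x ^ 2 := by
    have htan : x < Real.tan x := Real.lt_tan hxpos hxlt
    have : x * Real.cos x < Real.sin x := by
      rw [Real.tan_eq_sin_div_cos] at htan
      calc x * Real.cos x < Real.sin x / Real.cos x * Real.cos x := by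
            exact mul_lt_mul_of_pos_right htan hcos
        _ = Real.sin x := by field_simp
    have hcos1 : Real.cos x ≤ 1 := Real.cos_le_one x
    have h1 : x * Real.cos x ^ 2 ≤ x * Real.cos x := by
      nlinarith [mul_le_of_le_one_right (mul_nonneg hxpos.le hcos.le) hcos1]
    have h2 : x * Real.cos x ^ 2 < Real.sin x := lt_of_le_of_lt h1 this
    rw [le_div_iff₀ (by positivity : (0:ℝ) < Real.cos x ^ 2)]
    have hΔ2 : Δ = 2 * x := by rw [hx]; ring
    nlinarith [h2]
  rw [hℓ0eq, hh0eq]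
  calc ∑ i ∈ Finset.range n, ℓ i ≤ Δ := hsum
    _ ≤ 2 * Real.sin x / Real.cos x ^ 2 := hkey
end

section
/- Let 0 ≤ b < a ≤ 1, let 𝒫 be a partition of the arc of 𝒞 from P(a) to P(b) with norm ‖𝒫‖, and let 𝒫′ be a refinement of 𝒫. Set ℓ⁰ = dist(P(a), P(b)) and h⁰ = √(1 − (ℓ⁰/2)²). Then |L(𝒫′) − L(𝒫)| ≤ (ℓ⁰ / (h⁰)²) · (‖𝒫‖² / (4 − ‖𝒫‖²)). -/
/-- The polygonal length of the partition `t 0 > t 1 > ⋯ > t n`. -/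
noncomputable def polyLength (n : ℕ) (t : ℕ → ℝ) : ℝ :=
  ∑ i ∈ Finset.range n, dist (P (t i)) (P (t (i + 1)))

/-- The norm of a partition: the maximum length of one of its segments. -/
noncomputable def partNorm (n : ℕ) (t : ℕ → ℝ) : ℝ :=
  sSup {d | ∃ i < n, d = dist (P (t i)) (P (t (i + 1)))}

open Real Finset

/-- chord formula -/
lemma chord_eq_s7 {u v : ℝ} (hv : 0 ≤ v) (hvu : v ≤ u) (hu : u ≤ 1) :
    dist (P u) (P v) = 2 * Real.sin ((Real.arcsin u - Real.arcsin v) / 2) := by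
  have hv1 : v ≤ 1 := hvu.trans hu
  have hu0 : 0 ≤ u := hv.trans hvu
  set A := Real.arcsin u with hA
  set B := Real.arcsin v with hB
  have hsA : Real.sin A = u := Real.sin_arcsin (by linarith) hu
  have hsB : Real.sin B = v := Real.sin_arcsin (by linarith) hv1
  have hcA : Real.cos A = Real.sqrt (1 - u ^ 2) := Real.cos_arcsin u
  have hcB : Real.cos B = Real.sqrt (1 - v ^ 2) := Real.cos_arcsin v
  have hBA : B ≤ A := Real.monotone_arcsin hvu
  have hB0 : 0 ≤ B := Real.arcsin_nonneg.2 hv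
  have hA2 : A ≤ π / 2 := Real.arcsin_le_pi_div_two u
  have hs : 0 ≤ Real.sin ((A - B) / 2) := by
    apply Real.sin_nonneg_of_nonneg_of_le_pi
    · linarith
    · have := Real.pi_pos; linarith
  have hdist : dist (P u) (P v)
      = Real.sqrt ((Real.cos A - Real.cos B) ^ 2 + (Real.sin A - Real.sin B) ^ 2) := by
    rw [EuclideanSpace.dist_eq]
    congr 1
    rw [Fin.sum_univ_two]
    simp only [P, WithLp.ofLp_toLp, Matrix.cons_val_zero, Matrix.cons_val_one, Matrix.head_cons, Real.dist_eq,
      sq_abs, hsA, hsB, hcA, hcB]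
  rw [hdist]
  have hexp : (Real.cos A - Real.cos B) ^ 2 + (Real.sin A - Real.sin B) ^ 2
      = (2 * Real.sin ((A - B) / 2)) ^ 2 := by
    have h1 : Real.sin A ^ 2 + Real.cos A ^ 2 = 1 := Real.sin_sq_add_cos_sq A
    have h2 : Real.sin B ^ 2 + Real.cos B ^ 2 = 1 := Real.sin_sq_add_cos_sq B
    have h3 : Real.cos (A - B) = Real.cos A * Real.cos B + Real.sin A * Real.sin B :=
      Real.cos_sub A B
    have h4 : Real.sin ((A - B) / 2) ^ 2 = 1 / 2 - Real.cos (2 * ((A - B) / 2)) / 2 :=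
      Real.sin_sq_eq_half_sub _
    have h5 : 2 * ((A - B) / 2) = A - B := by ring
    rw [h5] at h4
    nlinarith [h1, h2, h3, h4]
  rw [hexp, Real.sqrt_sq (by linarith)]

/-- key inequality: `x cos² x ≤ sin x` on `[0, π/2)` -/
lemma key_ineq {x : ℝ} (h0 : 0 ≤ x) (hx : x < π / 2) : x * Real.cos x ^ 2 ≤ Real.sin x := by
  rcases h0.eq_or_lt with h | h
  · simp [← h]
  · have hc : 0 < Real.cos x := Real.cos_pos_of_mem_Ioo ⟨by linarith [Real.pi_pos], hx⟩
    have ht : x < Real.tan x := Real.lt_tan h hx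
    rw [Real.tan_eq_sin_div_cos] at ht
    have hs : 0 ≤ Real.sin x := Real.sin_nonneg_of_nonneg_of_le_pi h0
      (by linarith [Real.pi_pos])
    have hc1 : Real.cos x ≤ 1 := Real.cos_le_one x
    have : x * Real.cos x < Real.sin x := by
      calc x * Real.cos x < (Real.sin x / Real.cos x) * Real.cos x :=
            mul_lt_mul_of_pos_right ht hc
        _ = Real.sin x := by field_simp
    nlinarith

/-- chord ≤ arc -/
lemma chord_le_arc {u v : ℝ} (hv : 0 ≤ v) (hvu : v ≤ u) (hu : u ≤ 1) :
    dist (P u) (P v) ≤ Real.arcsin u - Real.arcsin v := by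
  rw [chord_eq_s7 hv hvu hu]
  have hBA : Real.arcsin v ≤ Real.arcsin u := Real.monotone_arcsin hvu
  have := Real.sin_le (x := (Real.arcsin u - Real.arcsin v) / 2) (by linarith)
  linarith

/-- arc minus chord bound per segment -/
lemma arc_sub_chord_le {u v : ℝ} (hv : 0 ≤ v) (hvu : v ≤ u) (hu : u ≤ 1)
    {N : ℝ} (hN : dist (P u) (P v) ≤ N) (hN2 : N < 2) :
    Real.arcsin u - Real.arcsin v - dist (P u) (P v)
      ≤ dist (P u) (P v) * (N ^ 2 / (4 - N ^ 2)) := by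
  set A := Real.arcsin u
  set B := Real.arcsin v
  have hBA : B ≤ A := Real.monotone_arcsin hvu
  have hB0 : 0 ≤ B := Real.arcsin_nonneg.2 hv
  have hA2 : A ≤ π / 2 := Real.arcsin_le_pi_div_two u
  set w := (A - B) / 2 with hw
  have hw0 : 0 ≤ w := by simp [hw]; linarith
  have hw4 : w < π / 2 := by
    have := Real.pi_pos
    simp only [hw]; linarith
  have hc : 0 < Real.cos w := Real.cos_pos_of_mem_Ioo ⟨by linarith [Real.pi_pos], hw4⟩
  have hkey : w * Real.cos w ^ 2 ≤ Real.sin w := key_ineq hw0 hw4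
  have hchord : dist (P u) (P v) = 2 * Real.sin w := chord_eq_s7 hv hvu hu
  set ℓ := dist (P u) (P v) with hℓ
  have hℓ0 : 0 ≤ ℓ := dist_nonneg
  have hcs : Real.sin w ^ 2 + Real.cos w ^ 2 = 1 := Real.sin_sq_add_cos_sq w
  have h4ℓ : 4 - ℓ ^ 2 = 4 * Real.cos w ^ 2 := by
    rw [hchord]; nlinarith
  have hden : 0 < 4 - ℓ ^ 2 := by rw [h4ℓ]; positivity
  have hdenN : 0 < 4 - N ^ 2 := by nlinarith [hℓ0.trans hN]
  -- A - B ≤ ℓ / cos² w, i.e. (A-B) cos² w ≤ ℓ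
  have h1 : (A - B) * Real.cos w ^ 2 ≤ ℓ := by
    rw [hchord]
    have : A - B = 2 * w := by simp [hw]; ring
    rw [this]; nlinarith
  -- then A - B - ℓ ≤ ℓ * (ℓ²/(4-ℓ²))
  have h2 : A - B - ℓ ≤ ℓ * (ℓ ^ 2 / (4 - ℓ ^ 2)) := by
    rw [← sub_nonneg]
    have expand : ℓ * (ℓ ^ 2 / (4 - ℓ ^ 2)) - (A - B - ℓ)
        = (ℓ * 4 - (A - B) * (4 - ℓ ^ 2)) / (4 - ℓ ^ 2) := by
      field_simp; ring
    rw [expand]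
    apply div_nonneg _ hden.le
    rw [h4ℓ]
    nlinarith
  have h3 : ℓ * (ℓ ^ 2 / (4 - ℓ ^ 2)) ≤ ℓ * (N ^ 2 / (4 - N ^ 2)) := by
    apply mul_le_mul_of_nonneg_left _ hℓ0
    rw [div_le_div_iff₀ hden hdenN]
    nlinarith
  linarith

/-- strict antitonicity from the local condition -/
lemma part_antitone {n : ℕ} {t : ℕ → ℝ} (h : ∀ i < n, t (i + 1) < t i) :
    ∀ {j k : ℕ}, j ≤ k → k ≤ n → t k ≤ t j := by
  intro j k hjk hk
  induction k with
  | zero => simp_all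
  | succ k ih =>
    rcases Nat.lt_succ_iff_lt_or_eq.mp (Nat.lt_succ_of_le hjk) with h' | h'
    · have := ih (Nat.lt_succ_iff.mp h') (by omega)
      have := h k (by omega)
      · linarith
    · subst h'; rfl

lemma part_anti_strict {n : ℕ} {t : ℕ → ℝ} (h : ∀ i < n, t (i + 1) < t i) :
    ∀ {j k : ℕ}, j < k → k ≤ n → t k < t j := by
  intro j k hjk hk
  have h1 : t k ≤ t (j + 1) := part_antitone h hjk hk
  have h2 : t (j + 1) < t j := h j (by omega)
  linarith


/-- Proposition 5: if `𝒫' = (m, s)` is a refinement of the partition `𝒫 = (n, t)` of the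
arc from `P a` to `P b`, then
`|L(𝒫') − L(𝒫)| ≤ (ℓ⁰ / (h⁰)²) · (‖𝒫‖² / (4 − ‖𝒫‖²))`. -/
theorem abs_polyLength_sub_le (a b : ℝ) (hb : 0 ≤ b) (hba : b < a) (ha : a ≤ 1)
    (n : ℕ) (t : ℕ → ℝ) (hP : IsPartition a b n t)
    (m : ℕ) (s : ℕ → ℝ) (hP' : IsPartition a b m s)
    (href : ∀ i ≤ n, ∃ j ≤ m, s j = t i)
    (ℓ0 : ℝ) (hℓ0 : ℓ0 = dist (P a) (P b))
    (h0 : ℝ) (hh0 : h0 = Real.sqrt (1 - (ℓ0 / 2) ^ 2)) :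
    |polyLength m s - polyLength n t|
      ≤ (ℓ0 / h0 ^ 2) * (partNorm n t ^ 2 / (4 - partNorm n t ^ 2)) := by
  obtain ⟨hn, ht0, htn, htdec⟩ := hP
  obtain ⟨hm, hs0, hsm, hsdec⟩ := hP'
  -- range bounds
  have ht_mem : ∀ i ≤ n, b ≤ t i ∧ t i ≤ a := by
    intro i hi
    constructor
    · rw [← htn]; exact part_antitone htdec hi le_rfl
    · rw [← ht0]; exact part_antitone htdec (Nat.zero_le i) hi
  have hs_mem : ∀ j ≤ m, b ≤ s j ∧ s j ≤ a := by
    intro j hj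
    constructor
    · rw [← hsm]; exact part_antitone hsdec hj le_rfl
    · rw [← hs0]; exact part_antitone hsdec (Nat.zero_le j) hj
  -- arcsin telescoping upper bound for any partition
  have arc_bound : ∀ (k : ℕ) (u : ℕ → ℝ), (∀ j ≤ k, b ≤ u j ∧ u j ≤ a) →
      (∀ i < k, u (i + 1) < u i) →
      polyLength k u ≤ Real.arcsin (u 0) - Real.arcsin (u k) := by
    intro k u hmem hdec
    have : polyLength k u ≤ ∑ i ∈ Finset.range k,
        (Real.arcsin (u i) - Real.arcsin (u (i + 1))) := by
      apply Finset.sum_le_sum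
      intro i hi
      rw [Finset.mem_range] at hi
      have h1 := hmem i (by omega)
      have h2 := hmem (i + 1) (by omega)
      exact chord_le_arc (by linarith [h2.1]) (hdec i hi).le (by linarith [h1.2])
    calc polyLength k u ≤ _ := this
      _ = Real.arcsin (u 0) - Real.arcsin (u k) :=
          Finset.sum_range_sub' (fun i => Real.arcsin (u i)) k
    done
  -- chord lower bound: total length at least the chord, via telescoping sums
  -- refinement: L t ≤ L s
  choose! jj hjm hjs using href
  have hjmono : ∀ i i', i < i' → i' ≤ n → jj i < jj i' := by
    intro i i' hii hi'
    by_contra hcon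
    push_neg at hcon
    have h1 : s (jj i) ≤ s (jj i') := by
      rcases hcon.eq_or_lt with h | h
      · rw [h]
      · exact (part_anti_strict hsdec h (hjm i (by omega))).le
    rw [hjs i (by omega), hjs i' hi'] at h1
    have : t i' < t i := part_anti_strict htdec hii hi'
    linarith
  have hj0 : jj 0 = 0 := by
    by_contra hcon
    have h1 : s (jj 0) < s 0 := part_anti_strict hsdec (Nat.pos_of_ne_zero hcon) (hjm 0 (by omega))
    rw [hjs 0 (by omega), ht0, hs0] at h1
    exact lt_irrefl a h1
  have hjn : jj n = m := by
    rcases (hjm n le_rfl).eq_or_lt with h | h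
    · exact h
    · exfalso
      have h1 : s m < s (jj n) := part_anti_strict hsdec h le_rfl
      rw [hjs n le_rfl, htn, hsm] at h1
      exact lt_irrefl b h1
  have hrefine : polyLength n t ≤ polyLength m s := by
    have main : ∀ i ≤ n, ∑ k ∈ Finset.range i, dist (P (t k)) (P (t (k + 1)))
        ≤ ∑ k ∈ Finset.Ico 0 (jj i), dist (P (s k)) (P (s (k + 1))) := by
      intro i hi
      induction i with
      | zero =>
        simp [hj0]
      | succ i ih =>
        have hii : i ≤ n := by omega
        have hji : jj i ≤ jj (i + 1) := (hjmono i (i + 1) (by omega) hi).le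
        rw [Finset.sum_range_succ]
        have step : dist (P (t i)) (P (t (i + 1)))
            ≤ ∑ k ∈ Finset.Ico (jj i) (jj (i + 1)), dist (P (s k)) (P (s (k + 1))) := by
          have heq : dist (P (t i)) (P (t (i + 1)))
              = dist (P (s (jj i))) (P (s (jj (i + 1)))) := by
            rw [hjs i hii, hjs (i + 1) hi]
          rw [heq]
          have hadd : jj i + (jj (i + 1) - jj i) = jj (i + 1) := by omega
          have hd : dist (P (s (jj i))) (P (s (jj (i + 1))))
              = dist ((fun k => P (s (jj i + k))) 0)
                ((fun k => P (s (jj i + k))) (jj (i + 1) - jj i)) := by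
            simp only [Nat.add_zero, hadd]
          rw [hd]
          calc _ ≤ ∑ k ∈ Finset.range (jj (i + 1) - jj i),
                dist (P (s (jj i + k))) (P (s (jj i + k + 1))) :=
              dist_le_range_sum_dist (fun k => P (s (jj i + k))) _
            _ = ∑ k ∈ Finset.Ico (jj i) (jj (i + 1)), dist (P (s k)) (P (s (k + 1))) := by
              rw [Finset.sum_Ico_eq_sum_range]
        calc _ ≤ (∑ k ∈ Finset.Ico 0 (jj i), dist (P (s k)) (P (s (k + 1))))
              + ∑ k ∈ Finset.Ico (jj i) (jj (i + 1)), dist (P (s k)) (P (s (k + 1))) := by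
              exact add_le_add (ih hii) step
          _ = ∑ k ∈ Finset.Ico 0 (jj (i + 1)), dist (P (s k)) (P (s (k + 1))) :=
              Finset.sum_Ico_consecutive _ (Nat.zero_le _) hji
    have h := main n le_rfl
    rw [hjn] at h
    rw [show polyLength n t = ∑ k ∈ Finset.range n, dist (P (t k)) (P (t (k + 1))) from rfl,
      show polyLength m s = ∑ k ∈ Finset.range m, dist (P (s k)) (P (s (k + 1))) from rfl,
      Finset.range_eq_Ico]
    rw [Finset.range_eq_Ico] at h
    rw [Finset.range_eq_Ico]; exact h
  -- partNorm facts
  set N := partNorm n t with hN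
  set S := {d | ∃ i < n, d = dist (P (t i)) (P (t (i + 1)))} with hS
  have hSne : S.Nonempty := ⟨dist (P (t 0)) (P (t 1)), 0, hn, rfl⟩
  have hSbd : ∀ d ∈ S, d ≤ π / 2 := by
    rintro d ⟨i, hi, rfl⟩
    have h1 := ht_mem i (by omega)
    have h2 := ht_mem (i + 1) (by omega)
    have := chord_le_arc (u := t i) (v := t (i + 1)) (by linarith [h2.1]) (htdec i hi).le
      (by linarith [h1.2])
    have hA2 := Real.arcsin_le_pi_div_two (t i)
    have hB0 : 0 ≤ Real.arcsin (t (i + 1)) := Real.arcsin_nonneg.2 (by linarith [h2.1])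
    linarith
  have hNle : N ≤ π / 2 := csSup_le hSne hSbd
  have hN2 : N < 2 := by
    have := Real.pi_lt_d2
    linarith
  have hmemN : ∀ d ∈ S, d ≤ N := fun d hd =>
    le_csSup ⟨π / 2, hSbd⟩ hd
  have hN0 : 0 ≤ N := le_trans dist_nonneg (hmemN _ ⟨0, hn, rfl⟩)
  have hdenN : 0 < 4 - N ^ 2 := by nlinarith
  have hcN : 0 ≤ N ^ 2 / (4 - N ^ 2) := by positivity
  -- total arc
  set D := Real.arcsin a - Real.arcsin b with hD
  have hD0 : 0 < D := by
    have := Real.strictMonoOn_arcsin (Set.mem_Icc.mpr ⟨by linarith, by linarith⟩)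
      (Set.mem_Icc.mpr ⟨by linarith, by linarith⟩) hba
    simp only [hD]; linarith
  have hD2 : D ≤ π / 2 := by
    have h1 := Real.arcsin_le_pi_div_two a
    have h2 : 0 ≤ Real.arcsin b := Real.arcsin_nonneg.2 hb
    simp [hD]; linarith
  -- L s ≤ D and L t ≤ D
  have hLs : polyLength m s ≤ D := by
    have := arc_bound m s hs_mem hsdec
    rwa [hs0, hsm] at this
  have hLt : polyLength n t ≤ D := by
    have := arc_bound n t ht_mem htdec
    rwa [ht0, htn] at this
  -- D ≤ ℓ0 / h0 ^ 2
  have hchord0 : ℓ0 = 2 * Real.sin (D / 2) := by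
    rw [hℓ0, chord_eq_s7 hb hba.le ha]
  have hw0 : 0 ≤ D / 2 := by linarith
  have hw4 : D / 2 < π / 2 := by have := Real.pi_pos; linarith
  have hc : 0 < Real.cos (D / 2) := Real.cos_pos_of_mem_Ioo ⟨by linarith [Real.pi_pos], hw4⟩
  have hh0sq : h0 ^ 2 = Real.cos (D / 2) ^ 2 := by
    have hcs := Real.sin_sq_add_cos_sq (D / 2)
    have hsq : (ℓ0 / 2) ^ 2 = Real.sin (D / 2) ^ 2 := by rw [hchord0]; ring
    have h1 : 1 - (ℓ0 / 2) ^ 2 = Real.cos (D / 2) ^ 2 := by rw [hsq]; linarith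
    rw [hh0, Real.sq_sqrt (by rw [h1]; positivity)]
    exact h1
  have hDle : D ≤ ℓ0 / h0 ^ 2 := by
    rw [hh0sq, le_div_iff₀ (by positivity)]
    have hkey := key_ineq hw0 hw4
    rw [hchord0]
    nlinarith
  have hℓ00 : 0 ≤ ℓ0 := hℓ0 ▸ dist_nonneg
  -- main upper estimate
  have hupper : polyLength m s - polyLength n t ≤ D * (N ^ 2 / (4 - N ^ 2)) := by
    have h1 : polyLength m s - polyLength n t
        ≤ D - polyLength n t := by linarith
    have h2 : D - polyLength n t = ∑ i ∈ Finset.range n,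
        ((Real.arcsin (t i) - Real.arcsin (t (i + 1))) - dist (P (t i)) (P (t (i + 1)))) := by
      rw [Finset.sum_sub_distrib, Finset.sum_range_sub' (fun i => Real.arcsin (t i)) n]
      simp [polyLength, hD, ht0, htn]
    have h3 : ∑ i ∈ Finset.range n,
        ((Real.arcsin (t i) - Real.arcsin (t (i + 1))) - dist (P (t i)) (P (t (i + 1))))
        ≤ ∑ i ∈ Finset.range n, dist (P (t i)) (P (t (i + 1))) * (N ^ 2 / (4 - N ^ 2)) := by
      apply Finset.sum_le_sum
      intro i hi
      rw [Finset.mem_range] at hi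
      have hm1 := ht_mem i (by omega)
      have hm2 := ht_mem (i + 1) (by omega)
      exact arc_sub_chord_le (by linarith [hm2.1]) (htdec i hi).le (by linarith [hm1.2])
        (hmemN _ ⟨i, hi, rfl⟩) hN2
    have h4 : ∑ i ∈ Finset.range n, dist (P (t i)) (P (t (i + 1))) * (N ^ 2 / (4 - N ^ 2))
        = polyLength n t * (N ^ 2 / (4 - N ^ 2)) := by
      rw [polyLength, ← Finset.sum_mul]
    have h5 : polyLength n t * (N ^ 2 / (4 - N ^ 2)) ≤ D * (N ^ 2 / (4 - N ^ 2)) :=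
      mul_le_mul_of_nonneg_right hLt hcN
    linarith
  have habs : |polyLength m s - polyLength n t| = polyLength m s - polyLength n t :=
    abs_of_nonneg (by linarith)
  rw [habs]
  calc polyLength m s - polyLength n t ≤ D * (N ^ 2 / (4 - N ^ 2)) := hupper
    _ ≤ (ℓ0 / h0 ^ 2) * (N ^ 2 / (4 - N ^ 2)) := mul_le_mul_of_nonneg_right hDle hcN
end

section
/- For all 0 ≤ b < a ≤ 1, the arc length of the arc of 𝒞 from P(a) to P(b) equals twice the area of the circular sector S(a,b): |arc| = 2 · area(S(a,b)). -/
open MeasureTheory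

/-- The arc length of the arc of the quarter circle from `P a` to `P b`: the supremum of
polygonal lengths over all partitions of the arc. -/
noncomputable def arcLength (a b : ℝ) : ℝ :=
  sSup {L | ∃ n t, IsPartition a b n t ∧ L = polyLength n t}

/-- The circular sector determined by `P a` and `P b`. -/
def sector (a b : ℝ) : Set (EuclideanSpace ℝ (Fin 2)) :=
  {p | ‖p‖ ≤ 1 ∧ b * p 0 ≤ Real.sqrt (1 - b ^ 2) * p 1 ∧ Real.sqrt (1 - a ^ 2) * p 1 ≤ a * p 0}

open Real Set

lemma sin_le' {x : ℝ} (h : 0 ≤ x) : Real.sin x ≤ x := by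
  rcases h.eq_or_lt with h | h
  · simp [← h]
  · exact (Real.sin_lt h).le

lemma dist_P {x y : ℝ} (hy : -1 ≤ y) (hxy : y ≤ x) (hx : x ≤ 1) :
    dist (P x) (P y) = 2 * Real.sin ((Real.arcsin x - Real.arcsin y) / 2) := by
  have hy1 : y ≤ 1 := hxy.trans hx
  have hx1 : -1 ≤ x := hy.trans hxy
  set A := Real.arcsin x with hA
  set B := Real.arcsin y with hB
  have hAB : B ≤ A := Real.monotone_arcsin hxy
  have h1 : (A - B) / 2 ≤ π / 2 := by
    have := Real.arcsin_le_pi_div_two x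
    have := Real.neg_pi_div_two_le_arcsin y
    linarith
  have h0 : 0 ≤ (A - B) / 2 := by linarith
  have hsin : 0 ≤ Real.sin ((A - B) / 2) :=
    Real.sin_nonneg_of_nonneg_of_le_pi h0 (by linarith [Real.pi_pos])
  have hxA : Real.sin A = x := Real.sin_arcsin hx1 hx
  have hyB : Real.sin B = y := Real.sin_arcsin hy hy1
  have hcA : Real.cos A = Real.sqrt (1 - x ^ 2) := Real.cos_arcsin x
  have hcB : Real.cos B = Real.sqrt (1 - y ^ 2) := Real.cos_arcsin y
  have hd : dist (P x) (P y) =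
      Real.sqrt ((Real.sqrt (1 - x ^ 2) - Real.sqrt (1 - y ^ 2)) ^ 2 + (x - y) ^ 2) := by
    rw [EuclideanSpace.dist_eq]
    congr 1
    simp [P, Fin.sum_univ_two, Real.dist_eq, sq_abs]
  rw [hd]
  have key : (Real.sqrt (1 - x ^ 2) - Real.sqrt (1 - y ^ 2)) ^ 2 + (x - y) ^ 2
      = (2 * Real.sin ((A - B) / 2)) ^ 2 := by
    have e1 : Real.sin ((A - B) / 2) ^ 2 = 1 / 2 - Real.cos (A - B) / 2 := by
      have := Real.sin_sq_eq_half_sub ((A - B) / 2)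
      rwa [show 2 * ((A - B) / 2) = A - B by ring] at this
    have e2 : Real.cos (A - B) = Real.cos A * Real.cos B + Real.sin A * Real.sin B :=
      Real.cos_sub A B
    have s1 := Real.sin_sq_add_cos_sq A
    have s2 := Real.sin_sq_add_cos_sq B
    rw [← hcA, ← hcB, ← hxA, ← hyB]
    nlinarith [e1, e2, s1, s2]
  rw [key, Real.sqrt_sq (by positivity)]




lemma part_anti {a b : ℝ} {n : ℕ} {t : ℕ → ℝ} (h : IsPartition a b n t) :
    ∀ i j, i ≤ j → j ≤ n → t j ≤ t i := by
  intro i j hij hjn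
  induction j with
  | zero => simp at hij; simp [hij]
  | succ k ih =>
    rcases Nat.lt_or_ge i (k+1) with hk | hk
    · have : t (k+1) < t k := h.2.2.2 k (by omega)
      exact this.le.trans (ih (by omega) (by omega))
    · have : i = k + 1 := by omega
      simp [this]

lemma part_mem {a b : ℝ} {n : ℕ} {t : ℕ → ℝ} (h : IsPartition a b n t) {i : ℕ} (hi : i ≤ n) :
    b ≤ t i ∧ t i ≤ a := by
  constructor
  · rw [← h.2.2.1]; exact part_anti h i n hi le_rfl
  · rw [← h.2.1]; exact part_anti h 0 i (Nat.zero_le _) hi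

lemma polyLength_le {a b : ℝ} (hb : 0 ≤ b) (ha : a ≤ 1) {n : ℕ} {t : ℕ → ℝ}
    (h : IsPartition a b n t) : polyLength n t ≤ arcsin a - arcsin b := by
  have key : ∀ i < n, dist (P (t i)) (P (t (i + 1))) ≤ arcsin (t i) - arcsin (t (i + 1)) := by
    intro i hi
    have h1 : b ≤ t (i+1) := (part_mem h (by omega)).1
    have h2 : t (i+1) ≤ t i := (h.2.2.2 i hi).le
    have h3 : t i ≤ a := (part_mem h (by omega) (i := i)).2
    have hm1 : (-1 : ℝ) ≤ t (i+1) := by linarith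
    have hle : t i ≤ 1 := by linarith
    rw [dist_P hm1 h2 hle]
    have h0 : 0 ≤ (arcsin (t i) - arcsin (t (i+1))) / 2 := by
      have := Real.monotone_arcsin h2; linarith
    have := sin_le' h0
    linarith
  calc polyLength n t ≤ ∑ i ∈ Finset.range n, (arcsin (t i) - arcsin (t (i + 1))) :=
        Finset.sum_le_sum (fun i hi => key i (Finset.mem_range.1 hi))
    _ = arcsin (t 0) - arcsin (t n) := Finset.sum_range_sub' (fun i => arcsin (t i)) n
    _ = arcsin a - arcsin b := by rw [h.2.1, h.2.2.1]

set_option maxHeartbeats 1000000 in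
lemma arcLength_eq {a b : ℝ} (hb : 0 ≤ b) (hba : b < a) (ha : a ≤ 1) :
    arcLength a b = arcsin a - arcsin b := by
  obtain ⟨A, hA'⟩ : ∃ A, arcsin a = A := ⟨_, rfl⟩
  obtain ⟨B, hB'⟩ : ∃ B, arcsin b = B := ⟨_, rfl⟩
  rw [hA', hB']
  have hBA : B < A := by
    rw [← hA', ← hB']
    exact Real.strictMonoOn_arcsin ⟨by linarith, by linarith⟩ ⟨by linarith, ha⟩ hba
  have hB0 : 0 ≤ B := hB' ▸ Real.arcsin_nonneg.2 hb
  have hA : A ≤ π / 2 := hA' ▸ Real.arcsin_le_pi_div_two a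
  apply csSup_eq_of_forall_le_of_forall_lt_exists_gt
  · -- nonempty
    refine ⟨polyLength 1 (fun i => if i = 0 then a else b), 1, _, ⟨one_pos, rfl, rfl, ?_⟩, rfl⟩
    intro i hi
    interval_cases i
    simpa using hba
  · rintro L ⟨n, t, hp, rfl⟩
    rw [← hA', ← hB']
    exact polyLength_le hb ha hp
  · intro w hw
    -- choose n large
    obtain ⟨m, hm⟩ := exists_nat_gt ((A - B) ^ 3 / (16 * (A - B - w)))
    set n := m + 1 with hn
    clear_value n
    have hn1 : (1 : ℝ) ≤ n := by
      have : 1 ≤ n := by omega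
      exact_mod_cast this
    have hnpos : (0 : ℝ) < n := by linarith
    set δ := (A - B) / n with hδ
    clear_value δ
    have hnδ : (n : ℝ) * δ = A - B := by
      rw [hδ]; field_simp
    have hδpos : 0 < δ := by rw [hδ]; exact div_pos (by linarith) hnpos
    have hδ2 : δ / 2 ≤ 1 := by
      have hABle : A - B ≤ 2 := by
        have := Real.pi_le_four
        linarith
      nlinarith
    -- the partition
    set t : ℕ → ℝ := fun i => Real.sin (A - i * δ) with ht
    clear_value t
    have hθmem : ∀ i : ℕ, i ≤ n → B ≤ A - i * δ ∧ A - i * δ ≤ A := by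
      intro i hi
      have hi' : (i : ℝ) ≤ n := by exact_mod_cast hi
      have h1 : (i : ℝ) * δ ≤ n * δ := mul_le_mul_of_nonneg_right hi' hδpos.le
      have h3 : 0 ≤ (i : ℝ) * δ := mul_nonneg (Nat.cast_nonneg i) hδpos.le
      exact ⟨by linarith, by linarith⟩
    have hpart : IsPartition a b n t := by
      refine ⟨by omega, ?_, ?_, ?_⟩
      · have : Real.sin A = a := by rw [← hA']; exact Real.sin_arcsin (by linarith) ha
        simp [ht, this]
      · have hsb : Real.sin B = b := by
          rw [← hB']; exact Real.sin_arcsin (by linarith) (by linarith)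
        simp only [ht]
        have : A - (n : ℝ) * δ = B := by linarith
        rw [this, hsb]
      · intro i hi
        simp only [ht]
        have h1 := (hθmem (i+1) (by omega)).1
        have h2 := (hθmem (i+1) (by omega)).2
        have h3 := (hθmem i (by omega)).1
        have h4 := (hθmem i (by omega)).2
        push_cast at h1 h2 h3 h4
        refine Real.strictMonoOn_sin ⟨?_, ?_⟩ ⟨?_, ?_⟩ ?_ <;> push_cast
        · linarith [Real.pi_pos]
        · linarith
        · linarith [Real.pi_pos]
        · linarith
        · nlinarith
    refine ⟨polyLength n t, ⟨n, t, hpart, rfl⟩, ?_⟩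
    have hdist : ∀ i < n, dist (P (t i)) (P (t (i + 1))) = 2 * Real.sin (δ / 2) := by
      intro i hi
      have m1 := hθmem i (by omega)
      have m2 := hθmem (i+1) (by omega)
      obtain ⟨m11, m12⟩ := m1
      obtain ⟨m21, m22⟩ := m2
      push_cast at m21 m22
      have hmono : t (i+1) ≤ t i := by
        simp only [ht]
        apply Real.sin_le_sin_of_le_of_le_pi_div_two
        · push_cast; linarith [Real.pi_pos]
        · linarith
        · push_cast; nlinarith
      have hm1 : (-1 : ℝ) ≤ t (i+1) := by rw [ht]; exact Real.neg_one_le_sin _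
      have hle1 : t i ≤ 1 := by rw [ht]; exact Real.sin_le_one _
      rw [dist_P hm1 hmono hle1]
      have a1 : arcsin (t i) = A - i * δ := by
        simp only [ht]
        exact Real.arcsin_sin (by linarith [Real.pi_pos]) (by linarith)
      have a2 : arcsin (t (i+1)) = A - ((i+1 : ℕ) : ℝ) * δ := by
        simp only [ht]
        exact Real.arcsin_sin (by push_cast; linarith [Real.pi_pos]) (by push_cast; linarith)
      rw [a1, a2]
      congr 2
      push_cast
      ring
    have hpl : polyLength n t = n * (2 * Real.sin (δ / 2)) := by
      rw [polyLength, Finset.sum_congr rfl (fun i hi => hdist i (Finset.mem_range.1 hi))]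
      simp [mul_comm]
    rw [hpl]
    have hsin := Real.sin_gt_sub_cube (by linarith : 0 < δ/2)
    have hδ3 : (n : ℝ) * δ ^ 3 = (A - B) ^ 3 / n ^ 2 := by
      rw [hδ]
      field_simp
    have hglue : (A - B) - (A - B) ^ 3 / (16 * n ^ 2) ≤ (n : ℝ) * (2 * Real.sin (δ / 2)) := by
      have e1 : (n : ℝ) * (2 * (δ/2 - (δ/2)^3/4)) = n * δ - (n * δ^3) / 16 := by ring
      have e2 : (n : ℝ) * (2 * (δ/2 - (δ/2)^3/4)) ≤ n * (2 * Real.sin (δ/2)) := by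
        apply mul_le_mul_of_nonneg_left _ hnpos.le
        nlinarith [pow_pos (by linarith : (0:ℝ) < δ/2) 3]
      rw [e1, hnδ, hδ3] at e2
      have : (A - B) ^ 3 / n ^ 2 / 16 = (A - B) ^ 3 / (16 * n ^ 2) := by
        rw [div_div]; ring_nf
      linarith [this ▸ e2]
    have hABw : 0 < A - B - w := by linarith
    have hnn : (n : ℝ) ≤ (n : ℝ) ^ 2 := by nlinarith
    have hmn : (A - B) ^ 3 / (16 * (A - B - w)) < (n : ℝ) ^ 2 := by
      have : (m : ℝ) < n := by rw [hn]; push_cast; linarith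
      linarith
    have hcube : (A - B) ^ 3 < 16 * (A - B - w) * (n : ℝ) ^ 2 := by
      rw [div_lt_iff₀ (by linarith)] at hmn
      nlinarith
    have hfin : (A - B) ^ 3 / (16 * n ^ 2) < A - B - w := by
      rw [div_lt_iff₀ (by positivity)]
      nlinarith
    linarith

set_option maxHeartbeats 1000000 in
lemma sector_volume {a b : ℝ} (hb : 0 ≤ b) (hba : b < a) (ha : a ≤ 1) :
    (volume (sector a b)).toReal = (arcsin a - arcsin b) / 2 := by
  have hb1 : b ≤ 1 := by linarith
  have ha0 : 0 ≤ a := by linarith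
  have ham1 : (-1:ℝ) ≤ a := by linarith
  have hbm1 : (-1:ℝ) ≤ b := by linarith
  set A := arcsin a with hA
  set B := arcsin b with hB
  have hsA : Real.sin A = a := Real.sin_arcsin ham1 ha
  have hsB : Real.sin B = b := Real.sin_arcsin hbm1 hb1
  have hcA : Real.cos A = Real.sqrt (1 - a ^ 2) := Real.cos_arcsin a
  have hcB : Real.cos B = Real.sqrt (1 - b ^ 2) := Real.cos_arcsin b
  have hB0 : 0 ≤ B := Real.arcsin_nonneg.2 hb
  have hA2 : A ≤ π / 2 := Real.arcsin_le_pi_div_two a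
  have hBA : B < A := Real.strictMonoOn_arcsin ⟨hbm1, hb1⟩ ⟨ham1, ha⟩ hba
  have hpi : 0 < π := Real.pi_pos
  set T : Set (ℝ × ℝ) :=
    {q | q.1 ^ 2 + q.2 ^ 2 ≤ 1 ∧ b * q.1 ≤ Real.sqrt (1 - b ^ 2) * q.2 ∧
      Real.sqrt (1 - a ^ 2) * q.2 ≤ a * q.1} with hT
  have hTmeas : MeasurableSet T := by
    have : IsClosed T := by
      rw [hT]
      simp only [setOf_and]
      apply IsClosed.inter (isClosed_le (by fun_prop) continuous_const)
      exact IsClosed.inter (isClosed_le (by fun_prop) (by fun_prop))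
        (isClosed_le (by fun_prop) (by fun_prop))
    exact this.measurableSet
  -- transfer to ℝ × ℝ
  have h1 := EuclideanSpace.volume_preserving_symm_measurableEquiv_toLp (Fin 2)
  have h2 := MeasureTheory.volume_preserving_finTwoArrow ℝ
  have hmp := h2.comp h1
  have hpre : sector a b =
      (fun p => (MeasurableEquiv.finTwoArrow ((MeasurableEquiv.toLp 2 (Fin 2 → ℝ)).symm p))) ⁻¹' T := by
    ext p
    simp only [sector, hT, mem_setOf_eq, mem_preimage, MeasurableEquiv.finTwoArrow_apply]
    have hnorm : ‖p‖ ≤ 1 ↔ p 0 ^ 2 + p 1 ^ 2 ≤ 1 := by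
      rw [EuclideanSpace.norm_eq, Fin.sum_univ_two, Real.norm_eq_abs, Real.norm_eq_abs,
        sq_abs, sq_abs, show (1:ℝ) = Real.sqrt 1 by simp]
      rw [Real.sqrt_le_sqrt_iff (by positivity), Real.sqrt_one]
    have he : ∀ i, (MeasurableEquiv.toLp 2 (Fin 2 → ℝ)).symm p i = p i := fun i => rfl
    rw [he, he, hnorm]
  have hvol : volume (sector a b) = volume T := by
    rw [hpre]
    exact hmp.measure_preimage hTmeas.nullMeasurableSet
  rw [hvol]
  have hiff : ∀ r θ : ℝ, 0 < r → -π < θ → θ < π →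
      (polarCoord.symm (r, θ) ∈ T ↔ (r ≤ 1 ∧ B ≤ θ ∧ θ ≤ A)) := by
    intro r θ hr hθ1 hθ2
    simp only [hT, Set.mem_setOf_eq, polarCoord_symm_apply]
    constructor
    · rintro ⟨h1, h2, h3⟩
      rw [← hcB, ← hsB] at h2
      rw [← hcA, ← hsA] at h3
      have hs1 : 0 ≤ Real.sin (θ - B) := by
        rw [Real.sin_sub]
        nlinarith
      have hs2 : 0 ≤ Real.sin (A - θ) := by
        rw [Real.sin_sub]
        nlinarith
      have hr2 : r ^ 2 ≤ 1 := by nlinarith [Real.sin_sq_add_cos_sq θ, sq_nonneg r]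
      have hr1 : r ≤ 1 := by nlinarith
      have hθA : θ ≤ A := by
        by_contra hc
        push_neg at hc
        have : Real.sin (A - θ) < 0 :=
          Real.sin_neg_of_neg_of_neg_pi_lt (by linarith) (by linarith)
        linarith
      have hBθ : B ≤ θ := by
        by_contra hc
        push_neg at hc
        rcases lt_or_ge (-π) (θ - B) with hcc | hcc
        · have : Real.sin (θ - B) < 0 :=
            Real.sin_neg_of_neg_of_neg_pi_lt (by linarith) hcc
          linarith
        · have hpos : 0 < Real.sin (A - θ - π) :=
            Real.sin_pos_of_pos_of_lt_pi (by linarith) (by linarith)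
          have hneg : Real.sin (A - θ) = -Real.sin (A - θ - π) := by
            rw [← Real.sin_add_pi (A - θ - π)]
            ring_nf
          linarith
      exact ⟨hr1, hBθ, hθA⟩
    · rintro ⟨h1, h2, h3⟩
      have hs1 : 0 ≤ Real.sin (θ - B) :=
        Real.sin_nonneg_of_nonneg_of_le_pi (by linarith) (by linarith)
      have hs2 : 0 ≤ Real.sin (A - θ) :=
        Real.sin_nonneg_of_nonneg_of_le_pi (by linarith) (by linarith)
      rw [Real.sin_sub] at hs1 hs2
      have hr2 : r ^ 2 ≤ 1 := by nlinarith
      refine ⟨by nlinarith [Real.sin_sq_add_cos_sq θ, sq_nonneg r, hr2], ?_, ?_⟩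
      · rw [← hcB, ← hsB]
        nlinarith
      · rw [← hcA, ← hsA]
        nlinarith
  change volume.real T = (A - B) / 2
  rw [← MeasureTheory.integral_indicator_one hTmeas,
    ← integral_comp_polarCoord_symm (T.indicator (1 : ℝ × ℝ → ℝ))]
  have htgt : MeasurableSet polarCoord.target := by
    rw [polarCoord_target]
    exact measurableSet_Ioi.prod measurableSet_Ioo
  have heq : Set.EqOn (fun p : ℝ × ℝ => p.1 • T.indicator (1 : ℝ × ℝ → ℝ) (polarCoord.symm p))
      ((Set.Ioc (0:ℝ) 1 ×ˢ Set.Icc B A).indicator (fun p : ℝ × ℝ => p.1)) polarCoord.target := by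
    rintro ⟨r, θ⟩ hp
    rw [polarCoord_target] at hp
    obtain ⟨hr, hθ⟩ := hp
    simp only [Set.mem_Ioi] at hr
    simp only [Set.mem_Ioo] at hθ
    have hiffr := hiff r θ hr hθ.1 hθ.2
    show r • T.indicator (1 : ℝ × ℝ → ℝ) (polarCoord.symm (r, θ)) =
      (Set.Ioc (0:ℝ) 1 ×ˢ Set.Icc B A).indicator (fun p : ℝ × ℝ => p.1) (r, θ)
    by_cases hm : r ≤ 1 ∧ B ≤ θ ∧ θ ≤ A
    · rw [Set.indicator_of_mem (hiffr.2 hm),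
        Set.indicator_of_mem (by exact ⟨⟨hr, hm.1⟩, hm.2.1, hm.2.2⟩)]
      simp
    · rw [Set.indicator_of_notMem (fun hmm => hm (hiffr.1 hmm)),
        Set.indicator_of_notMem (fun hmm => hm ⟨hmm.1.2, hmm.2.1, hmm.2.2⟩)]
      simp
  rw [MeasureTheory.setIntegral_congr_fun htgt heq]
  have hprodmeas : MeasurableSet (Set.Ioc (0:ℝ) 1 ×ˢ Set.Icc B A) :=
    measurableSet_Ioc.prod measurableSet_Icc
  rw [MeasureTheory.setIntegral_indicator hprodmeas]
  have hsub : (Set.Ioc (0:ℝ) 1 ×ˢ Set.Icc B A) ⊆ polarCoord.target := by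
    rw [polarCoord_target]
    rintro ⟨r, θ⟩ ⟨hr, hθ⟩
    simp only [Set.mem_Ioc] at hr
    simp only [Set.mem_Icc] at hθ
    exact ⟨Set.mem_Ioi.2 hr.1, Set.mem_Ioo.2 ⟨by linarith, by linarith⟩⟩
  rw [Set.inter_eq_self_of_subset_right hsub]
  have hfact : ∫ p in (Set.Ioc (0:ℝ) 1 ×ˢ Set.Icc B A), p.1 =
      (∫ r in Set.Ioc (0:ℝ) 1, r) * ∫ θ in Set.Icc B A, (1:ℝ) := by
    rw [Measure.volume_eq_prod,
      ← MeasureTheory.setIntegral_prod_mul (fun r : ℝ => r) (fun _ : ℝ => (1:ℝ))]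
    simp
  rw [hfact]
  have hI1 : (∫ r in Set.Ioc (0:ℝ) 1, r) = 1 / 2 := by
    rw [← intervalIntegral.integral_of_le zero_le_one, integral_id]
    norm_num
  have hI2 : (∫ θ in Set.Icc B A, (1:ℝ)) = A - B := by
    rw [MeasureTheory.setIntegral_const, Real.volume_real_Icc_of_le (by linarith)]
    simp
  rw [hI1, hI2]
  ring


/-- The arc length of the arc from `P a` to `P b` equals twice the area of the circular
sector `S(a,b)`. -/
theorem arcLength_eq_two_mul_sector_area (a b : ℝ) (hb : 0 ≤ b) (hba : b < a) (ha : a ≤ 1) :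
    arcLength a b = 2 * (volume (sector a b)).toReal := by
  rw [arcLength_eq hb hba ha, sector_volume hb hba ha]
  ring
end
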